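/- For every n ≥ 1 there exists a constant θ(n) > 0 such that for all symmetric n×n matrices ξ, η: θ(n) · (1+|ξ|²+|η|²)^{(n−1)/2} ≤ ∫₀¹ (1+|ξ+tη|²)^{(n−1)/2} dt. -/
import Mathlib

set_option maxHeartbeats 1000000

/-- The Hilbert--Schmidt (Frobenius) norm of a real `n × n` matrix. -/
noncomputable def frobNorm {n : ℕ} (A : Matrix (Fin n) (Fin n) ℝ) : ℝ :=
  Real.sqrt (∑ i, ∑ j, (A i j) ^ 2)

attribute [local instance] Matrix.frobeniusNormedAddCommGroup Matrix.frobeniusNormedSpace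

lemma frobNorm_eq_norm {n : ℕ} (A : Matrix (Fin n) (Fin n) ℝ) : frobNorm A = ‖A‖ := by
  rw [Matrix.frobenius_norm_def, frobNorm, Real.sqrt_eq_rpow]
  congr 1
  simp [Real.norm_eq_abs, sq_abs]

/-- Campanato's lemma. For every `n ≥ 1` there is a constant `θ(n) > 0` such
that for all symmetric `n × n` matrices `ξ, η`:
`θ(n) (1+|ξ|²+|η|²)^{(n−1)/2} ≤ ∫₀¹ (1+|ξ+tη|²)^{(n−1)/2} dt`. -/
theorem campanato_lower_bound (n : ℕ) (hn : 1 ≤ n) :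
    ∃ θ : ℝ, 0 < θ ∧
      ∀ ξ η : Matrix (Fin n) (Fin n) ℝ, ξ.IsSymm → η.IsSymm →
        θ * (1 + frobNorm ξ ^ 2 + frobNorm η ^ 2) ^ (((n : ℝ) - 1) / 2) ≤
          ∫ t in (0 : ℝ)..1, (1 + frobNorm (ξ + t • η) ^ 2) ^ (((n : ℝ) - 1) / 2) := by
  set p : ℝ := ((n : ℝ) - 1) / 2 with hp_def
  have hp : 0 ≤ p := by
    have : (1 : ℝ) ≤ (n : ℝ) := by exact_mod_cast hn
    unfold p; linarith
  refine ⟨(1/8) * (1/128) ^ p, by positivity, ?_⟩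
  intro ξ η _ _
  set x := frobNorm ξ with hx_def
  set y := frobNorm η with hy_def
  have hx0 : 0 ≤ x := Real.sqrt_nonneg _
  have hy0 : 0 ≤ y := Real.sqrt_nonneg _
  set z : ℝ → ℝ := fun t => frobNorm (ξ + t • η) with hz_def
  have hz0 : ∀ t, 0 ≤ z t := fun t => Real.sqrt_nonneg _
  set g : ℝ → ℝ := fun t => (1 + z t ^ 2) ^ p with hg_def
  -- continuity
  have hzcont : Continuous z := by
    have : Continuous fun t : ℝ => ξ + t • η := by continuity
    exact ((continuous_norm.comp this)).congr fun t => (frobNorm_eq_norm _).symm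
  have hgcont : Continuous g := by
    apply Continuous.rpow_const
    · continuity
    · intro t; left; positivity
  have hint : ∀ a b : ℝ, IntervalIntegrable g MeasureTheory.volume a b :=
    fun a b => hgcont.intervalIntegrable a b
  -- key geometric facts
  have hzξ : ∀ t : ℝ, 0 ≤ t → x - t * y ≤ z t := by
    intro t ht
    have h1 : ‖ξ‖ ≤ ‖ξ + t • η‖ + ‖t • η‖ := by
      calc ‖ξ‖ = ‖(ξ + t • η) - t • η‖ := by rw [add_sub_cancel_right]
        _ ≤ ‖ξ + t • η‖ + ‖t • η‖ := norm_sub_le _ _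
    have h2 : ‖t • η‖ = t * y := by
      rw [norm_smul, Real.norm_eq_abs, abs_of_nonneg ht, hy_def, frobNorm_eq_norm]
    rw [hx_def, frobNorm_eq_norm, hz_def]
    simp only [frobNorm_eq_norm]
    linarith [h1, h2.le, h2.ge]
  have hzdiff : ∀ s t : ℝ, s ≤ t → (t - s) * y ≤ z s + z t := by
    intro s t hst
    have h1 : ‖(ξ + t • η) - (ξ + s • η)‖ ≤ ‖ξ + s • η‖ + ‖ξ + t • η‖ := by
      calc ‖(ξ + t • η) - (ξ + s • η)‖ ≤ ‖ξ + t • η‖ + ‖ξ + s • η‖ := norm_sub_le _ _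
        _ = ‖ξ + s • η‖ + ‖ξ + t • η‖ := by ring
    have h2 : (ξ + t • η) - (ξ + s • η) = (t - s) • η := by
      rw [sub_smul]; abel
    rw [h2, norm_smul, Real.norm_eq_abs, abs_of_nonneg (by linarith)] at h1
    simp only [hz_def, frobNorm_eq_norm]
    calc (t - s) * y = (t - s) * ‖η‖ := by rw [hy_def, frobNorm_eq_norm]
      _ ≤ _ := h1
  set S : ℝ := x ^ 2 + y ^ 2 with hS_def
  have hS0 : 0 ≤ S := by positivity
  -- claim: there is a good subinterval of length 1/8
  have key : ∃ a : ℝ, 0 ≤ a ∧ a + 1/8 ≤ 1 ∧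
      ∀ t ∈ Set.Icc a (a + 1/8), (1 + S) / 128 ≤ 1 + z t ^ 2 := by
    by_cases hcase : y ^ 2 ≤ S / 4
    · -- small η case: ξ dominates, good on [0, 1/8]
      refine ⟨0, le_refl _, by norm_num, ?_⟩
      intro t ht
      obtain ⟨ht0, ht1⟩ := ht
      have ht1' : t ≤ 1 := by linarith
      have hxy : y ≤ x := by nlinarith
      have h1 : x - y ≤ z t := by
        have := hzξ t ht0
        nlinarith [mul_le_mul_of_nonneg_left ht1' hy0]
      nlinarith [hz0 t, sq_nonneg (x - 2*y), mul_nonneg (sub_nonneg.2 h1) (by linarith [hz0 t] : (0:ℝ) ≤ z t + (x - y))]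
    · push_neg at hcase
      by_cases hA : ∀ t ∈ Set.Icc (0:ℝ) (1/8), (3/8) * y ≤ z t
      · refine ⟨0, le_refl _, by norm_num, ?_⟩
        intro t ht
        have h := hA t (by simpa using ht)
        nlinarith [hz0 t]
      · push_neg at hA
        obtain ⟨s, hs, hsz⟩ := hA
        refine ⟨7/8, by norm_num, by norm_num, ?_⟩
        intro t ht
        obtain ⟨ht0, ht1⟩ := ht
        have h1 : (t - s) * y ≤ z s + z t := hzdiff s t (by linarith [hs.2])
        have h2 : (3/4 : ℝ) ≤ t - s := by linarith [hs.1, hs.2]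
        have h3 : (3/8) * y ≤ z t := by
          nlinarith [mul_le_mul_of_nonneg_right h2 hy0]
        nlinarith [hz0 t]
  obtain ⟨a, ha0, ha1, hgood⟩ := key
  -- lower bound the integral
  have hnonneg : ∀ u v : ℝ, u ≤ v → 0 ≤ ∫ t in u..v, g t := by
    intro u v huv
    apply intervalIntegral.integral_nonneg huv
    intro t _; positivity
  have hsplit : (∫ t in (0:ℝ)..1, g t) =
      (∫ t in (0:ℝ)..a, g t) + (∫ t in a..(a+1/8), g t) + (∫ t in (a+1/8)..1, g t) := by
    rw [intervalIntegral.integral_add_adjacent_intervals (hint 0 a) (hint a (a+1/8)),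
      intervalIntegral.integral_add_adjacent_intervals (hint 0 (a+1/8)) (hint (a+1/8) 1)]
  have hmid : (1/8) * (((1 + S) / 128) ^ p) ≤ ∫ t in a..(a+1/8), g t := by
    have h1 : ∀ t ∈ Set.Icc a (a + 1/8), ((1 + S) / 128) ^ p ≤ g t := by
      intro t ht
      exact Real.rpow_le_rpow (by positivity) (hgood t ht) hp
    calc (1/8) * (((1 + S) / 128) ^ p)
        = ∫ _ in a..(a+1/8), ((1 + S) / 128) ^ p := by
          rw [intervalIntegral.integral_const, smul_eq_mul]; ring_nf
      _ ≤ ∫ t in a..(a+1/8), g t := by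
          apply intervalIntegral.integral_mono_on (by linarith)
            (intervalIntegrable_const) (hint _ _) h1
  have hfinal : (1/8) * (1/128) ^ p * (1 + S) ^ p ≤ ∫ t in (0:ℝ)..1, g t := by
    have heq : (1/128 : ℝ) ^ p * (1 + S) ^ p = ((1 + S) / 128) ^ p := by
      rw [← Real.mul_rpow (by norm_num) (by linarith)]
      ring_nf
    calc (1/8) * (1/128) ^ p * (1 + S) ^ p = (1/8) * (((1 + S)/128) ^ p) := by
          rw [mul_assoc, heq]
      _ ≤ ∫ t in a..(a+1/8), g t := hmid
      _ ≤ ∫ t in (0:ℝ)..1, g t := by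
          rw [hsplit]
          have := hnonneg 0 a ha0
          have := hnonneg (a+1/8) 1 ha1
          linarith
  have hSe : 1 + frobNorm ξ ^ 2 + frobNorm η ^ 2 = 1 + S := by
    rw [hS_def, hx_def, hy_def]; ring
  rw [hSe]
  exact hfinal
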